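/- Let x ∈ Rep(Q̄,v) and y ∈ Rep(Q̄,w) satisfy μ_ℂ(x)_i = λ_i·Id and μ_ℂ(y)_i = λ_i·Id for all i ∈ I, for some λ ∈ ℂ^I. Then ν_{x,y} ∘ σ_{x,y} = 0, i.e., the sequence 0 → Hom(v,w) → Rep(Q;v,w) → Hom(v,w) → 0 with maps σ_{x,y} and ν_{x,y} is a chain complex. -/

import Mathlib

open scoped BigOperators
set_option linter.unusedSectionVars false
open Matrix

namespace QV

variable {E I : Type}

abbrev dSrc (s t : E → I) : E ⊕ E → I := Sum.elim s t
abbrev dTgt (s t : E → I) : E ⊕ E → I := Sum.elim t s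

section Reps

variable [Fintype E] [DecidableEq I]

abbrev Rep (s t : E → I) (v : I → ℕ) : Type :=
  ∀ h : E ⊕ E, Matrix (Fin (v (dTgt s t h))) (Fin (v (dSrc s t h))) ℂ

def castSq {a b : ℕ} (h : a = b) (M : Matrix (Fin a) (Fin a) ℂ) :
    Matrix (Fin b) (Fin b) ℂ := h ▸ M

def pos {s t : E → I} {v : I → ℕ} (x : Rep s t v) (e : E) :
    Matrix (Fin (v (t e))) (Fin (v (s e))) ℂ := x (Sum.inl e)

def neg {s t : E → I} {v : I → ℕ} (x : Rep s t v) (e : E) :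
    Matrix (Fin (v (s e))) (Fin (v (t e))) ℂ := x (Sum.inr e)

noncomputable def muC (s t : E → I) {v : I → ℕ} (x : Rep s t v) (i : I) :
    Matrix (Fin (v i)) (Fin (v i)) ℂ :=
  (∑ e : E, if hh : t e = i then castSq (congrArg v hh) (pos x e * neg x e) else 0)
  - ∑ e : E, if hh : s e = i then castSq (congrArg v hh) (neg x e * pos x e) else 0

def IsPreprojRep (s t : E → I) {v : I → ℕ} (lam : I → ℂ) (x : Rep s t v) : Prop :=
  ∀ i, muC s t x i = lam i • (1 : Matrix (Fin (v i)) (Fin (v i)) ℂ)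

/-- `Hom(v,w) = ⊕_i Hom(ℂ^{v_i}, ℂ^{w_i})`. -/
abbrev HomSp (v w : I → ℕ) : Type := ∀ i, Matrix (Fin (w i)) (Fin (v i)) ℂ

/-- `Rep(Q;v,w) = ⊕_{h ∈ Q̄} Hom(ℂ^{v_{s(h)}}, ℂ^{w_{t(h)}})`. -/
abbrev RepHom (s t : E → I) (v w : I → ℕ) : Type :=
  ∀ h : E ⊕ E, Matrix (Fin (w (dTgt s t h))) (Fin (v (dSrc s t h))) ℂ

def posH {s t : E → I} {v w : I → ℕ} (f : RepHom s t v w) (e : E) :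
    Matrix (Fin (w (t e))) (Fin (v (s e))) ℂ := f (Sum.inl e)

def negH {s t : E → I} {v w : I → ℕ} (f : RepHom s t v w) (e : E) :
    Matrix (Fin (w (s e))) (Fin (v (t e))) ℂ := f (Sum.inr e)

def castM {a b a' b' : ℕ} (h1 : a = a') (h2 : b = b')
    (M : Matrix (Fin a) (Fin b) ℂ) : Matrix (Fin a') (Fin b') ℂ :=
  Matrix.of fun i j => M (Fin.cast h1.symm i) (Fin.cast h2.symm j)

theorem castM_add {a b a' b' : ℕ} (h1 : a = a') (h2 : b = b')
    (M N : Matrix (Fin a) (Fin b) ℂ) :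
    castM h1 h2 (M + N) = castM h1 h2 M + castM h1 h2 N := by
  subst h1; subst h2; rfl

theorem castM_smul {a b a' b' : ℕ} (h1 : a = a') (h2 : b = b') (c : ℂ)
    (M : Matrix (Fin a) (Fin b) ℂ) :
    castM h1 h2 (c • M) = c • castM h1 h2 M := by
  subst h1; subst h2; rfl

theorem posH_add {s t : E → I} {v w : I → ℕ} (f g : RepHom s t v w) (e : E) :
    posH (f + g) e = posH f e + posH g e := rfl

theorem negH_add {s t : E → I} {v w : I → ℕ} (f g : RepHom s t v w) (e : E) :
    negH (f + g) e = negH f e + negH g e := rfl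

theorem posH_smul {s t : E → I} {v w : I → ℕ} (c : ℂ) (f : RepHom s t v w) (e : E) :
    posH (c • f) e = c • posH f e := rfl

theorem negH_smul {s t : E → I} {v w : I → ℕ} (c : ℂ) (f : RepHom s t v w) (e : E) :
    negH (c • f) e = c • negH f e := rfl

/-- The map `σ_{x,y}(u) = (u_{t(h)} x_h − y_h u_{s(h)})_{h ∈ Q̄}`. -/
noncomputable def sigmaMap (s t : E → I) {v w : I → ℕ} (x : Rep s t v) (y : Rep s t w) :
    HomSp v w →ₗ[ℂ] RepHom s t v w where
  toFun u := fun h => u (dTgt s t h) * x h - y h * u (dSrc s t h)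
  map_add' u u' := by
    funext h
    simp only [Pi.add_apply, Matrix.add_mul, Matrix.mul_add]
    abel
  map_smul' c u := by
    funext h
    simp only [Pi.smul_apply, Matrix.smul_mul, Matrix.mul_smul, RingHom.id_apply,
      smul_sub]

/-- The map `ν_{x,y}(f)_i = Σ_{h ∈ Q̄, t(h) = i} ε(h)(f_h x_{h̄} + y_h f_{h̄})`. -/
noncomputable def nuMap (s t : E → I) {v w : I → ℕ} (x : Rep s t v) (y : Rep s t w) :
    RepHom s t v w →ₗ[ℂ] HomSp v w where
  toFun f := fun i =>
    (∑ e : E, if hh : t e = i then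
        castM (congrArg w hh) (congrArg v hh)
          (posH f e * neg x e + pos y e * negH f e) else 0)
    - ∑ e : E, if hh : s e = i then
        castM (congrArg w hh) (congrArg v hh)
          (negH f e * pos x e + neg y e * posH f e) else 0
  map_add' f g := by
    funext i
    have e1 : ∀ e : E, (if hh : t e = i then
        castM (congrArg w hh) (congrArg v hh)
          (posH (f + g) e * neg x e + pos y e * negH (f + g) e) else 0)
        = (if hh : t e = i then
            castM (congrArg w hh) (congrArg v hh)
              (posH f e * neg x e + pos y e * negH f e) else 0)
          + (if hh : t e = i then
            castM (congrArg w hh) (congrArg v hh)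
              (posH g e * neg x e + pos y e * negH g e) else 0) := by
      intro e
      by_cases hh : t e = i
      · simp only [dif_pos hh, posH_add, negH_add, Matrix.add_mul, Matrix.mul_add,
          add_add_add_comm, castM_add]
      · simp [dif_neg hh]
    have e2 : ∀ e : E, (if hh : s e = i then
        castM (congrArg w hh) (congrArg v hh)
          (negH (f + g) e * pos x e + neg y e * posH (f + g) e) else 0)
        = (if hh : s e = i then
            castM (congrArg w hh) (congrArg v hh)
              (negH f e * pos x e + neg y e * posH f e) else 0)
          + (if hh : s e = i then
            castM (congrArg w hh) (congrArg v hh)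
              (negH g e * pos x e + neg y e * posH g e) else 0) := by
      intro e
      by_cases hh : s e = i
      · simp only [dif_pos hh, posH_add, negH_add, Matrix.add_mul, Matrix.mul_add,
          add_add_add_comm, castM_add]
      · simp [dif_neg hh]
    simp only [Pi.add_apply]
    rw [Finset.sum_congr rfl (fun e _ => e1 e), Finset.sum_congr rfl (fun e _ => e2 e),
      Finset.sum_add_distrib, Finset.sum_add_distrib]
    abel
  map_smul' c f := by
    funext i
    have e1 : ∀ e : E, (if hh : t e = i then
        castM (congrArg w hh) (congrArg v hh)
          (posH (c • f) e * neg x e + pos y e * negH (c • f) e) else 0)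
        = c • (if hh : t e = i then
            castM (congrArg w hh) (congrArg v hh)
              (posH f e * neg x e + pos y e * negH f e) else 0) := by
      intro e
      by_cases hh : t e = i
      · simp only [dif_pos hh, posH_smul, negH_smul, Matrix.smul_mul, Matrix.mul_smul,
          ← smul_add, castM_smul]
      · simp [dif_neg hh]
    have e2 : ∀ e : E, (if hh : s e = i then
        castM (congrArg w hh) (congrArg v hh)
          (negH (c • f) e * pos x e + neg y e * posH (c • f) e) else 0)
        = c • (if hh : s e = i then
            castM (congrArg w hh) (congrArg v hh)
              (negH f e * pos x e + neg y e * posH f e) else 0) := by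
      intro e
      by_cases hh : s e = i
      · simp only [dif_pos hh, posH_smul, negH_smul, Matrix.smul_mul, Matrix.mul_smul,
          ← smul_add, castM_smul]
      · simp [dif_neg hh]
    simp only [RingHom.id_apply, Pi.smul_apply]
    rw [Finset.sum_congr rfl (fun e _ => e1 e), Finset.sum_congr rfl (fun e _ => e2 e),
      ← Finset.smul_sum, ← Finset.smul_sum, smul_sub]

end Reps

theorem castM_rfl {a b : ℕ} (M : Matrix (Fin a) (Fin b) ℂ) : castM rfl rfl M = M := rfl

theorem castSq_rfl {a : ℕ} (M : Matrix (Fin a) (Fin a) ℂ) : castSq rfl M = M := rfl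

theorem castM_sub {a b a' b' : ℕ} (h1 : a = a') (h2 : b = b')
    (M N : Matrix (Fin a) (Fin b) ℂ) :
    castM h1 h2 (M - N) = castM h1 h2 M - castM h1 h2 N := by
  subst h1; subst h2; rfl

theorem lemma_nu_comp_sigma_eq_zero
    [Fintype E] [Fintype I] [DecidableEq I] (s t : E → I)
    {v w : I → ℕ} (lam : I → ℂ)
    (x : Rep s t v) (y : Rep s t w)
    (hx : IsPreprojRep s t lam x) (hy : IsPreprojRep s t lam y) :
    ∀ u : HomSp v w, nuMap s t x y (sigmaMap s t x y u) = 0 := by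
  intro u
  funext i
  have cM : ∀ {a b : ℕ} (h1 : a = a) (h2 : b = b) (M : Matrix (Fin a) (Fin b) ℂ),
      castM h1 h2 M = M := fun _ _ _ => rfl
  have cS : ∀ {a : ℕ} (h : a = a) (M : Matrix (Fin a) (Fin a) ℂ),
      castSq h M = M := fun _ _ => rfl
  have gen : ∀ {a b c d : ℕ} (A : Matrix (Fin a) (Fin c) ℂ) (X1 : Matrix (Fin c) (Fin d) ℂ)
      (Y1 : Matrix (Fin a) (Fin b) ℂ) (B : Matrix (Fin b) (Fin d) ℂ)
      (X2 : Matrix (Fin d) (Fin c) ℂ) (Y2 : Matrix (Fin b) (Fin a) ℂ),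
      (A * X1 - Y1 * B) * X2 + Y1 * (B * X2 - Y2 * A) = A * (X1 * X2) - Y1 * Y2 * A := by
    intro a b c d A X1 Y1 B X2 Y2
    simp only [Matrix.sub_mul, Matrix.mul_sub, Matrix.mul_assoc]
    abel
  have key1 : ∀ e : E,
      (if hh : t e = i then
        castM (congrArg w hh) (congrArg v hh)
          (posH (sigmaMap s t x y u) e * neg x e
            + pos y e * negH (sigmaMap s t x y u) e) else 0)
      = u i * (if hh : t e = i then castSq (congrArg v hh) (pos x e * neg x e) else 0)
        - (if hh : t e = i then castSq (congrArg w hh) (pos y e * neg y e) else 0) * u i := by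
    intro e
    by_cases hh : t e = i
    · subst hh
      rw [dif_pos rfl, dif_pos rfl, dif_pos rfl, cM, cS, cS]
      simp only [sigmaMap, LinearMap.coe_mk, AddHom.coe_mk, posH, negH, pos, neg,
        dTgt, dSrc, Sum.elim_inl, Sum.elim_inr]
      exact gen _ _ _ _ _ _
    · rw [dif_neg hh, dif_neg hh, dif_neg hh]
      simp
  have key2 : ∀ e : E,
      (if hh : s e = i then
        castM (congrArg w hh) (congrArg v hh)
          (negH (sigmaMap s t x y u) e * pos x e
            + neg y e * posH (sigmaMap s t x y u) e) else 0)
      = u i * (if hh : s e = i then castSq (congrArg v hh) (neg x e * pos x e) else 0)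
        - (if hh : s e = i then castSq (congrArg w hh) (neg y e * pos y e) else 0) * u i := by
    intro e
    by_cases hh : s e = i
    · subst hh
      rw [dif_pos rfl, dif_pos rfl, dif_pos rfl, cM, cS, cS]
      simp only [sigmaMap, LinearMap.coe_mk, AddHom.coe_mk, posH, negH, pos, neg,
        dTgt, dSrc, Sum.elim_inl, Sum.elim_inr]
      exact gen _ _ _ _ _ _
    · rw [dif_neg hh, dif_neg hh, dif_neg hh]
      simp
  simp only [nuMap, LinearMap.coe_mk, AddHom.coe_mk, Pi.zero_apply]
  rw [Finset.sum_congr rfl (fun e _ => key1 e), Finset.sum_congr rfl (fun e _ => key2 e),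
    Finset.sum_sub_distrib, Finset.sum_sub_distrib, ← Matrix.mul_sum, ← Matrix.mul_sum,
    ← Matrix.sum_mul, ← Matrix.sum_mul]
  have hx' := hx i
  have hy' := hy i
  rw [muC] at hx' hy'
  rw [sub_sub_sub_comm, ← Matrix.mul_sub, ← Matrix.sub_mul, hx', hy']
  simp [Matrix.mul_smul, Matrix.smul_mul]

end QV
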